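/- Let γ ∈ [1/2, 1), let T be a finite set with |T| = n, and define m : T^ℕ → (T → ℝ) by m(ξ)(t) = ∑_{j=0}^∞ γ^j · [ξ_j = t]. Then the image of m is contained in the simplex {x : T → ℝ | ∀t, x(t) ≥ 0 and ∑_t x(t) = 1/(1-γ)}, and the image contains all edges (1-faces) of this simplex. -/

import Mathlib

/-- Greedy partial sums for representing `c` as a subsum of `∑ γ^n`. -/
noncomputable def gs (γ c : ℝ) : ℕ → ℝ
  | 0 => 0
  | n+1 => gs γ c n + (if gs γ c n + γ^n ≤ c then γ^n else 0)

lemma gs_le (γ c : ℝ) (hc0 : 0 ≤ c) : ∀ n, gs γ c n ≤ c := by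
  intro n
  induction n with
  | zero => simpa [gs] using hc0
  | succ n ih =>
    simp only [gs]
    split <;> linarith

lemma gs_ge (γ c : ℝ) (hγ : 1/2 ≤ γ) (hγ1 : γ < 1) (hc1 : c ≤ 1/(1-γ)) :
    ∀ n, c ≤ gs γ c n + γ^n/(1-γ) := by
  have h1γ : (0:ℝ) < 1 - γ := by linarith
  have h0 : (0:ℝ) ≤ γ := by linarith
  intro n
  induction n with
  | zero => simpa [gs] using hc1
  | succ n ih =>
    simp only [gs]
    have hpn : (0:ℝ) ≤ γ^n := pow_nonneg h0 n
    split
    next h =>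
      have key : γ^n/(1-γ) = γ^n + γ^(n+1)/(1-γ) := by
        field_simp
        ring
      linarith
    next h =>
      push_neg at h
      have key : γ^n ≤ γ^(n+1)/(1-γ) := by
        rw [le_div_iff₀ h1γ, pow_succ]
        nlinarith
      linarith

lemma gs_partial (γ c : ℝ) :
    ∀ n, ∑ j ∈ Finset.range n, (if gs γ c j + γ^j ≤ c then γ^j else 0) = gs γ c n := by
  intro n
  induction n with
  | zero => simp [gs]
  | succ n ih => rw [Finset.sum_range_succ, ih]; rfl

lemma gs_hasSum (γ c : ℝ) (hγ : 1/2 ≤ γ) (hγ1 : γ < 1) (hc0 : 0 ≤ c) (hc1 : c ≤ 1/(1-γ)) :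
    HasSum (fun n => if gs γ c n + γ^n ≤ c then γ^n else 0) c := by
  have h0 : (0:ℝ) ≤ γ := by linarith
  have h1γ : (0:ℝ) < 1 - γ := by linarith
  set f : ℕ → ℝ := fun n => if gs γ c n + γ^n ≤ c then γ^n else 0 with hf
  have hsum : Summable f := by
    apply Summable.of_nonneg_of_le (fun n => ?_) (fun n => ?_)
      (summable_geometric_of_lt_one h0 hγ1)
    · simp only [hf]; split
      · exact pow_nonneg h0 n
      · exact le_refl 0
    · simp only [hf]; split
      · exact le_refl _
      · exact pow_nonneg h0 n
  have htend : Filter.Tendsto (gs γ c) Filter.atTop (nhds c) := by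
    have hlow : Filter.Tendsto (fun n => c - γ^n/(1-γ)) Filter.atTop (nhds c) := by
      have := (tendsto_pow_atTop_nhds_zero_of_lt_one h0 hγ1).div_const (1-γ)
      simpa using (Filter.Tendsto.const_sub c this)
    exact tendsto_of_tendsto_of_tendsto_of_le_of_le hlow tendsto_const_nhds
      (fun n => by have := gs_ge γ c hγ hγ1 hc1 n; linarith)
      (fun n => gs_le γ c hc0 n)
  have h2 : Filter.Tendsto (gs γ c) Filter.atTop (nhds (∑' n, f n)) := by
    have := hsum.hasSum.tendsto_sum_nat
    exact this.congr (gs_partial γ c)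
  have : (∑' n, f n) = c := tendsto_nhds_unique h2 htend
  exact this ▸ hsum.hasSum

/-- The image of the occupancy map `m` lies in the simplex
`{x | ∀ t, 0 ≤ x t ∧ ∑ t, x t = 1/(1-γ)}`, and contains every edge (segment between
two vertices) of that simplex, when γ ∈ [1/2, 1). -/
theorem stmt_2 (γ : ℝ) (hγ : 1/2 ≤ γ) (hγ1 : γ < 1)
    (T : Type*) [Fintype T] [Nonempty T] [DecidableEq T]
    (m : (ℕ → T) → T → ℝ)
    (hm : ∀ ξ t, m ξ t = ∑' j : ℕ, γ^j * (if ξ j = t then (1:ℝ) else 0))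
    (v : T → T → ℝ)
    (hv : ∀ t t', v t t' = if t' = t then 1/(1-γ) else 0) :
    (∀ ξ : ℕ → T, (∀ t, 0 ≤ m ξ t) ∧ ∑ t, m ξ t = 1/(1-γ)) ∧
    (∀ ti tj : T, segment ℝ (v ti) (v tj) ⊆ Set.range m) := by
  have h0 : (0:ℝ) ≤ γ := by linarith
  have h1γ : (0:ℝ) < 1 - γ := by linarith
  have hgeo : HasSum (fun j : ℕ => γ^j) (1/(1-γ)) := by
    simpa [one_div] using hasSum_geometric_of_lt_one h0 hγ1
  have hterm_nonneg : ∀ (ξ : ℕ → T) (t : T) (j : ℕ),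
      0 ≤ γ^j * (if ξ j = t then (1:ℝ) else 0) := by
    intro ξ t j
    have := pow_nonneg h0 j
    split <;> simp [this]
  have hsummable : ∀ (ξ : ℕ → T) (t : T),
      Summable (fun j : ℕ => γ^j * (if ξ j = t then (1:ℝ) else 0)) := by
    intro ξ t
    apply Summable.of_nonneg_of_le (hterm_nonneg ξ t) (fun j => ?_)
      (summable_geometric_of_lt_one h0 hγ1)
    have := pow_nonneg h0 j
    split <;> simp [this]
  constructor
  · intro ξ
    constructor
    · intro t
      rw [hm]
      exact tsum_nonneg (hterm_nonneg ξ t)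
    · simp_rw [hm]
      rw [← Summable.tsum_finsetSum (fun t _ => hsummable ξ t)]
      have : ∀ j : ℕ, (∑ t : T, γ^j * (if ξ j = t then (1:ℝ) else 0)) = γ^j := by
        intro j
        rw [← Finset.mul_sum]
        simp
      simp_rw [this]
      exact hgeo.tsum_eq
  · rintro ti tj x ⟨a, b, ha, hb, hab, rfl⟩
    set c := a / (1-γ) with hc
    have hc0 : 0 ≤ c := div_nonneg ha (le_of_lt h1γ)
    have hc1 : c ≤ 1/(1-γ) := by
      rw [hc, div_le_div_iff₀ h1γ h1γ]
      nlinarith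
    set ξ : ℕ → T := fun n => if gs γ c n + γ^n ≤ c then ti else tj with hξ
    refine ⟨ξ, ?_⟩
    have hgsum := gs_hasSum γ c hγ hγ1 hc0 hc1
    funext t
    rw [hm]
    by_cases hij : ti = tj
    · -- segment degenerates to a point
      subst hij
      have hξc : ∀ n, ξ n = ti := by intro n; simp [hξ]
      by_cases ht : t = ti
      · subst ht
        have : (fun j : ℕ => γ^j * (if ξ j = t then (1:ℝ) else 0)) = fun j => γ^j := by
          funext j; simp [hξc]
        rw [this, hgeo.tsum_eq]
        simp only [Pi.add_apply, Pi.smul_apply, smul_eq_mul, hv, if_pos rfl]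
        simp only [if_true]
        field_simp
        linarith
      · have : (fun j : ℕ => γ^j * (if ξ j = t then (1:ℝ) else 0)) = fun _ => (0:ℝ) := by
          funext j; rw [hξc, if_neg (fun h => ht h.symm), mul_zero]
        rw [this, tsum_zero]
        simp [hv, ht]
    · by_cases hti : t = ti
      · subst hti
        have heq : (fun j : ℕ => γ^j * (if ξ j = t then (1:ℝ) else 0))
            = fun n => if gs γ c n + γ^n ≤ c then γ^n else 0 := by
          funext n
          by_cases h : gs γ c n + γ^n ≤ c <;> simp [hξ, h, Ne.symm hij]
        rw [heq, hgsum.tsum_eq]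
        simp [hv, hij, hc]
        ring
      · by_cases htj : t = tj
        · subst htj
          have heq : (fun j : ℕ => γ^j * (if ξ j = t then (1:ℝ) else 0))
              = fun n => γ^n - (if gs γ c n + γ^n ≤ c then γ^n else 0) := by
            funext n
            by_cases h : gs γ c n + γ^n ≤ c <;> simp [hξ, h, hij]
          rw [heq, (hgeo.sub hgsum).tsum_eq]
          have hb' : b = 1 - a := by linarith
          simp [hv, Ne.symm hij, hc, hb']
          ring
        · have : (fun j : ℕ => γ^j * (if ξ j = t then (1:ℝ) else 0)) = fun _ => (0:ℝ) := by
            funext j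
            simp only [hξ]
            split <;>
              [rw [if_neg (fun h => hti h.symm), mul_zero];
               rw [if_neg (fun h => htj h.symm), mul_zero]]
          rw [this, tsum_zero]
          simp [hv, hti, htj]
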